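/- For every n ≥ 5 and every k with 3 ≤ k ≤ n − 1, CP_{n,k}^{⌈k/2⌉} ≺ CP_{n,k+1}^{⌈(k+1)/2⌉} (where CP_{n,n}^{⌈n/2⌉} is the path P_n); hence S_n = CP_{n,3}^2 ≺ CP_{n,4}^2 ≺ ⋯ ≺ CP_{n,n−1}^{⌈(n−1)/2⌉} ≺ P_n. -/

import Mathlib

namespace TreeOrder

attribute [local instance] Classical.propDecidable

variable {V : Type*} {W : Type*}

/-- `side G u v` = number of vertices strictly closer to `u` than to `v`;
for an edge `uv` of a tree this is the order of the component of `T - uv` containing `u`. -/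
noncomputable def side [Fintype V] (G : SimpleGraph V) (u v : V) : ℕ :=
  (Finset.univ.filter fun w => G.dist w u < G.dist w v).card

/-- `mu G u v = min (n_u(e), n_v(e))` for the edge `e = uv`. -/
noncomputable def mu [Fintype V] (G : SimpleGraph V) (u v : V) : ℕ :=
  min (side G u v) (side G v u)

/-- `mu` as a function on unordered pairs. -/
noncomputable def muE [Fintype V] (G : SimpleGraph V) : Sym2 V → ℕ :=
  Sym2.lift ⟨fun u v => mu G u v, fun _ _ => min_comm _ _⟩

/-- `r G i` = number of edges `e` of `G` with `μ(e) = i`. -/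
noncomputable def r [Fintype V] (G : SimpleGraph V) (i : ℕ) : ℕ :=
  (Finset.univ.filter fun e : Sym2 V => e ∈ G.edgeSet ∧ muE G e = i).card

/-- `tailSum G n k = Σ_{i=k}^{⌊n/2⌋} r_i(G)`. -/
noncomputable def tailSum [Fintype V] (G : SimpleGraph V) (n k : ℕ) : ℕ :=
  ∑ i ∈ Finset.Icc k (n / 2), r G i

/-- The order `⪯` on trees with `n` vertices, via edge division vectors. -/
def Preceq [Fintype V] [Fintype W] (n : ℕ) (G : SimpleGraph V) (H : SimpleGraph W) : Prop :=
  ∀ k, 1 ≤ k → k ≤ n / 2 → tailSum G n k ≤ tailSum H n k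

/-- The strict order `≺`. -/
def Prec [Fintype V] [Fintype W] (n : ℕ) (G : SimpleGraph V) (H : SimpleGraph W) : Prop :=
  Preceq n G H ∧ ∃ k, 1 ≤ k ∧ k ≤ n / 2 ∧ tailSum G n k < tailSum H n k

/-- Equality of edge division vectors `r(G) = r(H)`. -/
def SameEdgeDivision [Fintype V] [Fintype W] (n : ℕ) (G : SimpleGraph V)
    (H : SimpleGraph W) : Prop :=
  ∀ i, 1 ≤ i → i ≤ n / 2 → r G i = r H i

/-- `u` is a centroidal vertex: `n_u(e) ≥ n/2` for every edge `e` incident to `u`. -/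
def IsCentroidal [Fintype V] (G : SimpleGraph V) (u : V) : Prop :=
  ∀ v, G.Adj u v → Fintype.card V ≤ 2 * side G u v

/-- `u` is a proper centroidal vertex: `n_u(e) > ⌈n/2⌉` for every edge `e` incident to `u`. -/
def IsProperCentroidal [Fintype V] (G : SimpleGraph V) (u : V) : Prop :=
  ∀ v, G.Adj u v → (Fintype.card V + 1) / 2 < side G u v

/-- The edge `uv` is a center edge: `μ(uv) = ⌊n/2⌋`. -/
def IsCenterEdge [Fintype V] (G : SimpleGraph V) (u v : V) : Prop :=
  G.Adj u v ∧ mu G u v = Fintype.card V / 2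

/-- degree of a vertex -/
noncomputable def deg [Fintype V] (G : SimpleGraph V) (v : V) : ℕ :=
  (Finset.univ.filter fun w => G.Adj v w).card

/-- The path `P_n` on `n` vertices. -/
def pathG (n : ℕ) : SimpleGraph (Fin n) :=
  SimpleGraph.fromRel fun x y => (x : ℕ) + 1 = y

/-- The star `S_n` on `n` vertices. -/
def starG (n : ℕ) : SimpleGraph (Fin n) :=
  SimpleGraph.fromRel fun x _ => (x : ℕ) = 0

/-- The double star path `CP_{n;a,b}` : a path on `n - a - b` vertices (at positions
`a, …, n - b - 1`) with `a` pendent vertices attached to its first vertex and `b`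
pendent vertices attached to its last vertex. -/
def doubleStar (n a b : ℕ) : SimpleGraph (Fin n) :=
  SimpleGraph.fromRel fun x y =>
    ((x : ℕ) < a ∧ (y : ℕ) = a) ∨
    (a ≤ (x : ℕ) ∧ (x : ℕ) + 1 = y ∧ (y : ℕ) < n - b) ∨
    ((x : ℕ) = n - b - 1 ∧ n - b ≤ (y : ℕ))

/-- `CP_{n,k}^s` : a path `v_1 ⋯ v_k` (at positions `0, …, k-1`) with all
`n - k` pendent vertices attached to `v_s` (position `s - 1`). -/
def cpOne (n k s : ℕ) : SimpleGraph (Fin n) :=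
  SimpleGraph.fromRel fun x y =>
    ((x : ℕ) + 1 = y ∧ (y : ℕ) < k) ∨ ((x : ℕ) = s - 1 ∧ k ≤ (y : ℕ))

/-- The caterpillar `CP(n; n_1, …, n_k)` : a path `v_1 ⋯ v_k` (at positions `0, …, k-1`),
where pendent vertex `j` (for `k ≤ j < n`) is attached to the path vertex at
position `f j` (so `n_i = |{j : f j = i - 1}|`). -/
def caterpillar (n k : ℕ) (f : ℕ → ℕ) : SimpleGraph (Fin n) :=
  SimpleGraph.fromRel fun x y =>
    ((x : ℕ) + 1 = y ∧ (y : ℕ) < k) ∨ (k ≤ (y : ℕ) ∧ (x : ℕ) = f y)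

/-- The balanced starlike tree `SP_{n,q}` : the center is vertex `0`, and vertex
`j ≥ 1` lies on branch `(j - 1) % q` at depth `(j - 1)/q + 1`; so the `q` branches are
paths whose orders pairwise differ by at most `1`. -/
def balancedStar (n q : ℕ) : SimpleGraph (Fin n) :=
  SimpleGraph.fromRel fun x y =>
    ((x : ℕ) = 0 ∧ 1 ≤ (y : ℕ) ∧ (y : ℕ) ≤ q) ∨ (1 ≤ (x : ℕ) ∧ (x : ℕ) + q = y)

/-- The edge-moving transformation of `G` w.r.t. the edge `uv`: contract `uv` to `u`
(moving all edges at `v` to `u`) and attach `v` to `u` as a pendent vertex. -/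
def edgeMove (G : SimpleGraph V) (u v : V) : SimpleGraph V :=
  SimpleGraph.fromRel fun x y =>
    (G.Adj x y ∧ x ≠ v ∧ y ≠ v) ∨ (x = u ∧ y = v) ∨ (x = u ∧ G.Adj v y ∧ y ≠ u)

/-! ### Auxiliary development -/

open SimpleGraph Finset

section Lip

variable {V : Type*}

lemma abs_sub_le_walk_length (G : SimpleGraph V) (f : V → ℤ)
    (hf : ∀ a b, G.Adj a b → |f a - f b| ≤ 1) {x y : V} (p : G.Walk x y) :
    |f x - f y| ≤ (p.length : ℤ) := by
  induction p with
  | nil => simp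
  | @cons u v w h p ih =>
      have h1 := hf _ _ h
      have := abs_sub_abs_le_abs_sub (f u - f w) (f v - f w)
      have htri : |f u - f w| ≤ |f u - f v| + |f v - f w| := by
        have := abs_sub_le (f u) (f v) (f w); linarith [this]
      simp only [SimpleGraph.Walk.length_cons]
      push_cast
      linarith

lemma lipschitz_le_dist (G : SimpleGraph V) (f : V → ℤ)
    (hf : ∀ a b, G.Adj a b → |f a - f b| ≤ 1) {x y : V} (hr : G.Reachable x y) :
    |f x - f y| ≤ (G.dist x y : ℤ) := by
  obtain ⟨p, hp⟩ := hr.exists_walk_length_eq_dist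
  rw [← hp]
  exact abs_sub_le_walk_length G f hf p

end Lip

section CP

variable {n k s : ℕ}

lemma cp_adj {x y : Fin n} :
    (cpOne n k s).Adj x y ↔ x ≠ y ∧
      ((((x:ℕ)+1 = y ∧ (y:ℕ) < k) ∨ ((x:ℕ) = s-1 ∧ k ≤ (y:ℕ))) ∨
       (((y:ℕ)+1 = x ∧ (x:ℕ) < k) ∨ ((y:ℕ) = s-1 ∧ k ≤ (x:ℕ)))) := by
  simp only [cpOne, SimpleGraph.fromRel_adj]

end CP

section CP2

variable {n k s : ℕ} (hs : 2 ≤ s) (hsk : s + 1 ≤ k) (hkn : k ≤ n)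

include hsk hkn

omit hsk in
lemma cp_adj_succ {a : ℕ} (h : a + 1 < k) :
    (cpOne n k s).Adj ⟨a, by omega⟩ ⟨a + 1, by omega⟩ := by
  rw [cp_adj]
  refine ⟨?_, Or.inl (Or.inl ⟨rfl, h⟩)⟩
  simp [Fin.ext_iff]

include hs in
lemma cp_adj_pend {j : ℕ} (hj : k ≤ j) (hjn : j < n) :
    (cpOne n k s).Adj ⟨s - 1, by omega⟩ ⟨j, hjn⟩ := by
  rw [cp_adj]
  refine ⟨?_, Or.inl (Or.inr ⟨rfl, hj⟩)⟩
  simp only [ne_eq, Fin.ext_iff]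
  omega

include hs in
lemma cp_reach_zero (x : Fin n) : (cpOne n k s).Reachable ⟨0, by omega⟩ x := by
  have path : ∀ a (ha : a < k), (cpOne n k s).Reachable ⟨0, by omega⟩ ⟨a, by omega⟩ := by
    intro a
    induction a with
    | zero => intro _; rfl
    | succ m ih =>
        intro ha
        exact (ih (by omega)).trans (cp_adj_succ hkn ha).reachable
  by_cases hx : (x : ℕ) < k
  · have := path x hx
    simpa using this
  · have h1 : (cpOne n k s).Reachable ⟨0, by omega⟩ ⟨s - 1, by omega⟩ := path (s-1) (by omega)
    have h2 := (cp_adj_pend hs hsk hkn (le_of_not_gt hx) x.isLt).reachable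
    have : (⟨(x : ℕ), x.isLt⟩ : Fin n) = x := rfl
    rw [this] at h2
    exact h1.trans h2

include hs in
lemma cp_connected : (cpOne n k s).Connected := by
  rw [SimpleGraph.connected_iff]
  refine ⟨fun x y => (cp_reach_zero hs hsk hkn x).symm.trans (cp_reach_zero hs hsk hkn y), ⟨⟨0, by omega⟩⟩⟩

include hs in
lemma cp_dist_path_le (d : ℕ) : ∀ (a : ℕ) (h : a + d < k),
    (cpOne n k s).dist ⟨a, by omega⟩ ⟨a + d, by omega⟩ ≤ d := by
  induction d with
  | zero => intro a _; simp
  | succ m ih =>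
      intro a h
      have tri := (cp_connected hs hsk hkn (n := n)).dist_triangle
        (u := (⟨a, by omega⟩ : Fin n)) (v := ⟨a + m, by omega⟩) (w := ⟨a + m + 1, by omega⟩)
      have h1 := ih a (by omega)
      have h2 : (cpOne n k s).dist ⟨a + m, by omega⟩ ⟨a + m + 1, by omega⟩ ≤ 1 :=
        le_of_eq (SimpleGraph.dist_eq_one_iff_adj.mpr (cp_adj_succ hkn (by omega)))
      have : (⟨a + (m+1), by omega⟩ : Fin n) = ⟨a + m + 1, by omega⟩ := by
        simp [Fin.ext_iff]; omega
      rw [this]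
      omega

end CP2

section CP3

variable {n k s : ℕ} (hs : 2 ≤ s) (hsk : s + 1 ≤ k) (hkn : k ≤ n)

/-- the Lipschitz test function -/
def fLip (k s : ℕ) (e : ℤ) (x : Fin n) : ℤ :=
  if (x:ℕ) < k then ((x:ℕ) : ℤ) else ((s:ℤ) - 1 + e)

include hs hsk hkn in
lemma fLip_lip {e : ℤ} (he : e = 1 ∨ e = -1) (a b : Fin n) (hab : (cpOne n k s).Adj a b) :
    |fLip k s e a - fLip k s e b| ≤ 1 := by
  rw [cp_adj] at hab
  obtain ⟨hne, hrel⟩ := hab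
  rw [abs_le]
  unfold fLip
  have ha := a.isLt
  have hb := b.isLt
  rcases hrel with (⟨h1, h2⟩ | ⟨h1, h2⟩) | (⟨h1, h2⟩ | ⟨h1, h2⟩) <;>
    rcases he with he | he <;>
    subst he <;>
    split_ifs <;>
    constructor <;>
    push_cast <;>
    omega

include hs hsk hkn in
lemma cp_dist_lower (x y : Fin n) {e : ℤ} (he : e = 1 ∨ e = -1) :
    |fLip k s e x - fLip k s e y| ≤ ((cpOne n k s).dist x y : ℤ) :=
  lipschitz_le_dist _ _ (fLip_lip hs hsk hkn he) ((cp_connected hs hsk hkn) x y)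

include hs hsk hkn in
lemma cp_dist_pp {a b : ℕ} (han : a < n) (hbn : b < n) (ha : a < k) (hb : b < k) :
    (cpOne n k s).dist ⟨a, han⟩ ⟨b, hbn⟩ = (a - b) + (b - a) := by
  have hup : ∀ (c d : ℕ) (hcn : c < n) (hdn : d < n), c ≤ d → d < k →
      (cpOne n k s).dist ⟨c, hcn⟩ ⟨d, hdn⟩ ≤ d - c := by
    intro c d hcn hdn hcd hdk
    have := cp_dist_path_le hs hsk hkn (d - c) c (by omega)
    have he : (⟨c + (d - c), by omega⟩ : Fin n) = ⟨d, hdn⟩ := by simp [Fin.ext_iff]; omega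
    rwa [he] at this
  have hlow := cp_dist_lower hs hsk hkn (⟨a, han⟩ : Fin n) ⟨b, hbn⟩ (e := 1) (Or.inl rfl)
  unfold fLip at hlow
  simp only [ha, hb, if_true] at hlow
  rcases le_total a b with hab | hab
  · have h1 := hup a b han hbn hab hb
    rw [abs_le] at hlow
    omega
  · have h1 := hup b a hbn han hab ha
    rw [SimpleGraph.dist_comm] at h1
    rw [abs_le] at hlow
    omega

include hs hsk hkn in
lemma cp_dist_pq {a b : ℕ} (han : a < n) (hbn : b < n) (ha : a < k) (hb : k ≤ b) :
    (cpOne n k s).dist ⟨a, han⟩ ⟨b, hbn⟩ = (a - (s-1)) + ((s-1) - a) + 1 := by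
  have hadj : (cpOne n k s).dist ⟨s - 1, by omega⟩ ⟨b, hbn⟩ = 1 :=
    SimpleGraph.dist_eq_one_iff_adj.mpr (cp_adj_pend hs hsk hkn hb hbn)
  have tri := (cp_connected hs hsk hkn (n := n)).dist_triangle
    (u := (⟨a, han⟩ : Fin n)) (v := ⟨s - 1, by omega⟩) (w := ⟨b, hbn⟩)
  have hpp := cp_dist_pp hs hsk hkn han (show s - 1 < n by omega) ha (by omega)
  have hl1 := cp_dist_lower hs hsk hkn (⟨a, han⟩ : Fin n) ⟨b, hbn⟩ (e := 1) (Or.inl rfl)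
  have hl2 := cp_dist_lower hs hsk hkn (⟨a, han⟩ : Fin n) ⟨b, hbn⟩ (e := -1) (Or.inr rfl)
  unfold fLip at hl1 hl2
  simp only [ha, if_true, show ¬ (b < k) by omega, if_false] at hl1 hl2
  rw [abs_le] at hl1 hl2
  omega

include hs hsk hkn in
lemma cp_dist_qq {a b : ℕ} (han : a < n) (hbn : b < n) (ha : k ≤ a) (hb : k ≤ b)
    (hab : a ≠ b) : (cpOne n k s).dist ⟨a, han⟩ ⟨b, hbn⟩ = 2 := by
  have h1 : (cpOne n k s).dist ⟨s - 1, by omega⟩ ⟨a, han⟩ = 1 :=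
    SimpleGraph.dist_eq_one_iff_adj.mpr (cp_adj_pend hs hsk hkn ha han)
  have h2 : (cpOne n k s).dist ⟨s - 1, by omega⟩ ⟨b, hbn⟩ = 1 :=
    SimpleGraph.dist_eq_one_iff_adj.mpr (cp_adj_pend hs hsk hkn hb hbn)
  have tri := (cp_connected hs hsk hkn (n := n)).dist_triangle
    (u := (⟨a, han⟩ : Fin n)) (v := ⟨s - 1, by omega⟩) (w := ⟨b, hbn⟩)
  rw [SimpleGraph.dist_comm] at h1
  have hpos : 0 < (cpOne n k s).dist ⟨a, han⟩ ⟨b, hbn⟩ :=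
    (cp_connected hs hsk hkn (n := n)).pos_dist_of_ne (by simp [Fin.ext_iff]; omega)
  have hne1 : (cpOne n k s).dist ⟨a, han⟩ ⟨b, hbn⟩ ≠ 1 := by
    intro hd
    have hadj := SimpleGraph.dist_eq_one_iff_adj.mp hd
    rw [cp_adj] at hadj
    obtain ⟨-, hrel⟩ := hadj
    simp only at hrel
    omega
  omega

end CP3

section CP4

set_option linter.unusedSectionVars false

lemma card_filter_Ico {n : ℕ} (a b : ℕ) (hb : b ≤ n) :
    (Finset.univ.filter fun w : Fin n => a ≤ (w:ℕ) ∧ (w:ℕ) < b).card = b - a := by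
  rw [← Nat.card_Ico a b]
  apply Finset.card_bij (fun (w : Fin n) _ => (w : ℕ))
  · intro w hw; simp only [Finset.mem_filter] at hw; simp only [Finset.mem_Ico]; omega
  · intro w1 h1 w2 h2 h; exact Fin.ext h
  · intro m hm
    simp only [Finset.mem_Ico] at hm
    exact ⟨⟨m, by omega⟩, by simp; omega, rfl⟩

lemma card_filter_congr {n : ℕ} (p q : Fin n → Prop) [DecidablePred p] [DecidablePred q]
    (h : ∀ w : Fin n, p w ↔ q w) :
    (Finset.univ.filter p).card = (Finset.univ.filter q).card := by
  congr 1
  apply Finset.filter_congr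
  intro x _
  exact (h x)

variable {n k s : ℕ} (hs : 2 ≤ s) (hsk : s + 1 ≤ k) (hkn : k ≤ n)

include hs hsk hkn

lemma cp_side_path_l {i : ℕ} (hi : i + 1 < k) :
    side (cpOne n k s) ⟨i, by omega⟩ ⟨i+1, by omega⟩
      = if s - 1 ≤ i then i + 1 + (n - k) else i + 1 := by
  unfold side
  have key : ∀ w : Fin n,
      ((cpOne n k s).dist w ⟨i, by omega⟩ < (cpOne n k s).dist w ⟨i+1, by omega⟩)
        ↔ ((w:ℕ) ≤ i ∨ (s - 1 ≤ i ∧ k ≤ (w:ℕ))) := by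
    rintro ⟨wv, hwv⟩
    by_cases hw : wv < k
    · rw [cp_dist_pp hs hsk hkn hwv (by omega) hw (by omega),
        cp_dist_pp hs hsk hkn hwv (by omega) hw (by omega)]
      simp only [Fin.val_mk]
      omega
    · have h1 : (cpOne n k s).dist ⟨wv, hwv⟩ ⟨i, by omega⟩
          = (i - (s-1)) + ((s-1) - i) + 1 := by
        rw [SimpleGraph.dist_comm]; exact cp_dist_pq hs hsk hkn (by omega) hwv (by omega) (by omega)
      have h2 : (cpOne n k s).dist ⟨wv, hwv⟩ ⟨i+1, by omega⟩
          = ((i+1) - (s-1)) + ((s-1) - (i+1)) + 1 := by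
        rw [SimpleGraph.dist_comm]; exact cp_dist_pq hs hsk hkn (by omega) hwv (by omega) (by omega)
      rw [h1, h2]
      simp only [Fin.val_mk]
      omega
  rw [card_filter_congr _ _ key]
  by_cases hcase : s - 1 ≤ i
  · rw [if_pos hcase]
    have hsplit : ∀ w : Fin n, ((w:ℕ) ≤ i ∨ (s - 1 ≤ i ∧ k ≤ (w:ℕ)))
        ↔ ((0 ≤ (w:ℕ) ∧ (w:ℕ) < i + 1) ∨ (k ≤ (w:ℕ) ∧ (w:ℕ) < n)) := by
      rintro ⟨wv, hwv⟩; simp only [Fin.val_mk]; omega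
    rw [card_filter_congr _ _ hsplit, Finset.filter_or]
    rw [Finset.card_union_of_disjoint]
    · rw [card_filter_Ico 0 (i+1) (by omega), card_filter_Ico k n (le_refl n)]
      omega
    · rw [Finset.disjoint_filter]
      rintro ⟨wv, hwv⟩ _ h1 h2
      simp only [Fin.val_mk] at h1 h2
      omega
  · rw [if_neg hcase]
    have hsplit : ∀ w : Fin n, ((w:ℕ) ≤ i ∨ (s - 1 ≤ i ∧ k ≤ (w:ℕ)))
        ↔ (0 ≤ (w:ℕ) ∧ (w:ℕ) < i + 1) := by
      rintro ⟨wv, hwv⟩; simp only [Fin.val_mk]; omega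
    rw [card_filter_congr _ _ hsplit, card_filter_Ico 0 (i+1) (by omega)]
    omega

lemma cp_side_path_r {i : ℕ} (hi : i + 1 < k) :
    side (cpOne n k s) ⟨i+1, by omega⟩ ⟨i, by omega⟩
      = if s - 1 ≤ i then k - (i+1) else (k - (i+1)) + (n - k) := by
  unfold side
  have key : ∀ w : Fin n,
      ((cpOne n k s).dist w ⟨i+1, by omega⟩ < (cpOne n k s).dist w ⟨i, by omega⟩)
        ↔ ((i + 1 ≤ (w:ℕ) ∧ (w:ℕ) < k) ∨ (i < s - 1 ∧ k ≤ (w:ℕ))) := by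
    rintro ⟨wv, hwv⟩
    by_cases hw : wv < k
    · rw [cp_dist_pp hs hsk hkn hwv (by omega) hw (by omega),
        cp_dist_pp hs hsk hkn hwv (by omega) hw (by omega)]
      simp only [Fin.val_mk]
      omega
    · have h1 : (cpOne n k s).dist ⟨wv, hwv⟩ ⟨i, by omega⟩
          = (i - (s-1)) + ((s-1) - i) + 1 := by
        rw [SimpleGraph.dist_comm]; exact cp_dist_pq hs hsk hkn (by omega) hwv (by omega) (by omega)
      have h2 : (cpOne n k s).dist ⟨wv, hwv⟩ ⟨i+1, by omega⟩
          = ((i+1) - (s-1)) + ((s-1) - (i+1)) + 1 := by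
        rw [SimpleGraph.dist_comm]; exact cp_dist_pq hs hsk hkn (by omega) hwv (by omega) (by omega)
      rw [h1, h2]
      simp only [Fin.val_mk]
      omega
  rw [card_filter_congr _ _ key]
  by_cases hcase : s - 1 ≤ i
  · rw [if_pos hcase]
    have hsplit : ∀ w : Fin n, ((i + 1 ≤ (w:ℕ) ∧ (w:ℕ) < k) ∨ (i < s - 1 ∧ k ≤ (w:ℕ)))
        ↔ (i + 1 ≤ (w:ℕ) ∧ (w:ℕ) < k) := by
      rintro ⟨wv, hwv⟩; simp only [Fin.val_mk]; omega
    rw [card_filter_congr _ _ hsplit, card_filter_Ico (i+1) k hkn]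
  · rw [if_neg hcase]
    have hsplit : ∀ w : Fin n, ((i + 1 ≤ (w:ℕ) ∧ (w:ℕ) < k) ∨ (i < s - 1 ∧ k ≤ (w:ℕ)))
        ↔ ((i + 1 ≤ (w:ℕ) ∧ (w:ℕ) < k) ∨ (k ≤ (w:ℕ) ∧ (w:ℕ) < n)) := by
      rintro ⟨wv, hwv⟩; simp only [Fin.val_mk]; omega
    rw [card_filter_congr _ _ hsplit, Finset.filter_or, Finset.card_union_of_disjoint]
    · rw [card_filter_Ico (i+1) k hkn, card_filter_Ico k n (le_refl n)]
    · rw [Finset.disjoint_filter]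
      rintro ⟨wv, hwv⟩ _ h1 h2
      simp only [Fin.val_mk] at h1 h2
      omega

lemma cp_side_pend_1 {j : ℕ} (hj : k ≤ j) (hjn : j < n) :
    side (cpOne n k s) ⟨j, hjn⟩ ⟨s - 1, by omega⟩ = 1 := by
  unfold side
  have key : ∀ w : Fin n,
      ((cpOne n k s).dist w ⟨j, hjn⟩ < (cpOne n k s).dist w ⟨s-1, by omega⟩)
        ↔ ((j ≤ (w:ℕ) ∧ (w:ℕ) < j + 1)) := by
    rintro ⟨wv, hwv⟩
    by_cases hw : wv < k
    · rw [cp_dist_pq hs hsk hkn hwv hjn hw hj,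
        cp_dist_pp hs hsk hkn hwv (by omega) hw (by omega)]
      simp only [Fin.val_mk]
      omega
    · have h2 : (cpOne n k s).dist ⟨wv, hwv⟩ ⟨s-1, by omega⟩ = 1 := by
        rw [SimpleGraph.dist_comm]
        exact SimpleGraph.dist_eq_one_iff_adj.mpr (cp_adj_pend hs hsk hkn (by omega) hwv)
      rw [h2]
      by_cases hwj : wv = j
      · subst hwj
        rw [SimpleGraph.dist_self]
        simp only [Fin.val_mk]
        omega
      · rw [cp_dist_qq hs hsk hkn hwv hjn (by omega) hj hwj]
        simp only [Fin.val_mk]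
        omega
  rw [card_filter_congr _ _ key, card_filter_Ico j (j+1) (by omega)]
  omega

lemma cp_side_pend_2 {j : ℕ} (hj : k ≤ j) (hjn : j < n) :
    side (cpOne n k s) ⟨s - 1, by omega⟩ ⟨j, hjn⟩ = n - 1 := by
  unfold side
  have key : ∀ w : Fin n,
      ((cpOne n k s).dist w ⟨s-1, by omega⟩ < (cpOne n k s).dist w ⟨j, hjn⟩)
        ↔ ¬ ((j ≤ (w:ℕ) ∧ (w:ℕ) < j + 1)) := by
    rintro ⟨wv, hwv⟩
    by_cases hw : wv < k
    · rw [cp_dist_pq hs hsk hkn hwv hjn hw hj,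
        cp_dist_pp hs hsk hkn hwv (by omega) hw (by omega)]
      simp only [Fin.val_mk]
      omega
    · have h2 : (cpOne n k s).dist ⟨wv, hwv⟩ ⟨s-1, by omega⟩ = 1 := by
        rw [SimpleGraph.dist_comm]
        exact SimpleGraph.dist_eq_one_iff_adj.mpr (cp_adj_pend hs hsk hkn (by omega) hwv)
      rw [h2]
      by_cases hwj : wv = j
      · subst hwj
        rw [SimpleGraph.dist_self]
        simp only [Fin.val_mk]
        omega
      · rw [cp_dist_qq hs hsk hkn hwv hjn (by omega) hj hwj]
        simp only [Fin.val_mk]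
        omega
  rw [card_filter_congr _ _ key]
  have := Finset.card_filter_add_card_filter_not
    (s := (Finset.univ : Finset (Fin n))) (p := fun w : Fin n => (j ≤ (w:ℕ) ∧ (w:ℕ) < j + 1))
  rw [card_filter_Ico j (j+1) (by omega)] at this
  simp only [Finset.card_univ, Fintype.card_fin] at this
  omega

end CP4

section CP5

set_option linter.unusedSectionVars false

lemma muE_mk {V : Type*} [Fintype V] (G : SimpleGraph V) (a b : V) :
    muE G s(a, b) = mu G a b := rfl

lemma tailSum_eq_card {V : Type*} [Fintype V] (G : SimpleGraph V) (n j : ℕ) :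
    tailSum G n j = (Finset.univ.filter fun e : Sym2 V =>
      e ∈ G.edgeSet ∧ muE G e ∈ Finset.Icc j (n/2)).card := by
  classical
  unfold tailSum r
  rw [eq_comm]
  have hset : (Finset.univ.filter fun e : Sym2 V =>
      e ∈ G.edgeSet ∧ muE G e ∈ Finset.Icc j (n/2))
      = (Finset.Icc j (n/2)).biUnion
        (fun i => Finset.univ.filter fun e : Sym2 V => e ∈ G.edgeSet ∧ muE G e = i) := by
    ext e
    simp only [Finset.mem_filter, Finset.mem_biUnion, Finset.mem_univ, true_and]
    constructor
    · rintro ⟨h1, h2⟩; exact ⟨muE G e, h2, h1, rfl⟩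
    · rintro ⟨i, hi, h1, h2⟩; exact ⟨h1, h2 ▸ hi⟩
  rw [hset, Finset.card_biUnion]
  intro i _ i' _ hii'
  rw [Function.onFun, Finset.disjoint_filter]
  rintro e _ ⟨-, h1⟩ ⟨-, h2⟩
  exact hii' (h1 ▸ h2)

variable {n k s : ℕ} (hs : 2 ≤ s) (hsk : s + 1 ≤ k) (hkn : k ≤ n)

include hs hsk hkn

lemma cp_mu_path {i : ℕ} (hi : i + 1 < k) (h1 : 2*(s-1) ≤ n) (h2 : 2*(k-s) ≤ n) :
    mu (cpOne n k s) ⟨i, by omega⟩ ⟨i+1, by omega⟩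
      = if s - 1 ≤ i then k - 1 - i else i + 1 := by
  unfold mu
  rw [cp_side_path_l hs hsk hkn hi, cp_side_path_r hs hsk hkn hi]
  split_ifs with h <;> omega

lemma cp_mu_pend {j : ℕ} (hj : k ≤ j) (hjn : j < n) :
    mu (cpOne n k s) ⟨s - 1, by omega⟩ ⟨j, hjn⟩ = 1 := by
  unfold mu
  rw [cp_side_pend_1 hs hsk hkn hj hjn, cp_side_pend_2 hs hsk hkn hj hjn]
  omega

end CP5

section CP6

set_option linter.unusedSectionVars false

def pe (n : ℕ) (hn : 0 < n) (i : ℕ) : Sym2 (Fin n) :=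
  s(⟨i % n, Nat.mod_lt _ hn⟩, ⟨(i+1) % n, Nat.mod_lt _ hn⟩)

def qe (n : ℕ) (hn : 0 < n) (s t : ℕ) : Sym2 (Fin n) :=
  s(⟨(s-1) % n, Nat.mod_lt _ hn⟩, ⟨t % n, Nat.mod_lt _ hn⟩)

lemma pe_eq {n : ℕ} (hn : 0 < n) {i : ℕ} (h1 : i < n) (h : i + 1 < n) :
    pe n hn i = s(⟨i, h1⟩, ⟨i+1, h⟩) := by
  unfold pe
  have e1 : (⟨i % n, Nat.mod_lt _ hn⟩ : Fin n) = ⟨i, h1⟩ := Fin.ext (Nat.mod_eq_of_lt h1)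
  have e2 : (⟨(i+1) % n, Nat.mod_lt _ hn⟩ : Fin n) = ⟨i+1, h⟩ := Fin.ext (Nat.mod_eq_of_lt h)
  rw [e1, e2]

lemma qe_eq {n s : ℕ} (hn : 0 < n) {t : ℕ} (h1 : s - 1 < n) (h : t < n) :
    qe n hn s t = s(⟨s-1, h1⟩, ⟨t, h⟩) := by
  unfold qe
  have e1 : (⟨(s-1) % n, Nat.mod_lt _ hn⟩ : Fin n) = ⟨s-1, h1⟩ := Fin.ext (Nat.mod_eq_of_lt h1)
  have e2 : (⟨t % n, Nat.mod_lt _ hn⟩ : Fin n) = ⟨t, h⟩ := Fin.ext (Nat.mod_eq_of_lt h)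
  rw [e1, e2]

variable {n k s : ℕ} (hs : 2 ≤ s) (hsk : s + 1 ≤ k) (hkn : k ≤ n)

include hs hsk hkn

lemma cp_tailSum_ge_two {j : ℕ} (hj : 2 ≤ j) (h1 : 2*(s-1) ≤ n) (h2 : 2*(k-s) ≤ n) :
    tailSum (cpOne n k s) n j = (s - j) + (k + 1 - s - j) := by
  rw [tailSum_eq_card]
  have hn : 0 < n := by omega
  set I : Finset ℕ := Finset.Icc (j-1) (s-2) ∪ Finset.Icc (s-1) (k-1-j) with hI
  have hImem : ∀ i, i ∈ I ↔ ((j-1 ≤ i ∧ i ≤ s-2) ∨ (s-1 ≤ i ∧ i ≤ k-1-j)) := by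
    intro i; simp [hI, Finset.mem_union, Finset.mem_Icc]
  have himg : (Finset.univ.filter fun e : Sym2 (Fin n) =>
      e ∈ (cpOne n k s).edgeSet ∧ muE (cpOne n k s) e ∈ Finset.Icc j (n/2))
      = I.image (pe n hn) := by
    ext e
    induction e using Sym2.ind with
    | _ x y =>
      obtain ⟨xv, hxv⟩ := x
      obtain ⟨yv, hyv⟩ := y
      simp only [Finset.mem_filter, Finset.mem_univ, true_and, Finset.mem_image]
      constructor
      · rintro ⟨hadj, hmu⟩
        rw [SimpleGraph.mem_edgeSet, cp_adj] at hadj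
        obtain ⟨hne, hrel⟩ := hadj
        simp only [Fin.val_mk] at hrel
        rcases hrel with (⟨ha, hb⟩ | ⟨ha, hb⟩) | (⟨ha, hb⟩ | ⟨ha, hb⟩)
        · -- xv + 1 = yv, yv < k
          have hy' : (⟨yv, hyv⟩ : Fin n) = ⟨xv + 1, by omega⟩ := by
            simp [Fin.ext_iff]; omega
          rw [hy', muE_mk, cp_mu_path hs hsk hkn (by omega) h1 h2,
            Finset.mem_Icc] at hmu
          refine ⟨xv, ?_, by rw [pe_eq hn (by omega) (by omega), hy']⟩
          rw [hImem]
          split_ifs at hmu <;> omega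
        · -- xv = s - 1, k ≤ yv : pendant edge, mu = 1 < j
          exfalso
          have hx' : (⟨xv, hxv⟩ : Fin n) = ⟨s - 1, by omega⟩ := by
            simp [Fin.ext_iff]; omega
          rw [hx', muE_mk, cp_mu_pend hs hsk hkn hb hyv, Finset.mem_Icc] at hmu
          omega
        · -- yv + 1 = xv, xv < k
          have hx' : (⟨xv, hxv⟩ : Fin n) = ⟨yv + 1, by omega⟩ := by
            simp [Fin.ext_iff]; omega
          rw [Sym2.eq_swap, hx', muE_mk, cp_mu_path hs hsk hkn (by omega) h1 h2,
            Finset.mem_Icc] at hmu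
          refine ⟨yv, ?_, by rw [pe_eq hn (by omega) (by omega), Sym2.eq_swap, hx']⟩
          rw [hImem]
          split_ifs at hmu <;> omega
        · -- yv = s - 1, k ≤ xv
          exfalso
          have hy' : (⟨yv, hyv⟩ : Fin n) = ⟨s - 1, by omega⟩ := by
            simp [Fin.ext_iff]; omega
          rw [Sym2.eq_swap, hy', muE_mk, cp_mu_pend hs hsk hkn hb hxv,
            Finset.mem_Icc] at hmu
          omega
      · rintro ⟨i, hiI, he⟩
        rw [hImem] at hiI
        have hik : i + 1 < k := by omega
        rw [pe_eq hn (by omega) (by omega)] at he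
        rw [← he]
        refine ⟨(SimpleGraph.mem_edgeSet _).mpr (cp_adj_succ hkn hik), ?_⟩
        rw [muE_mk, cp_mu_path hs hsk hkn hik h1 h2, Finset.mem_Icc]
        split_ifs with h <;> omega
  rw [himg, Finset.card_image_of_injOn]
  · rw [hI, Finset.card_union_of_disjoint]
    · rw [Nat.card_Icc, Nat.card_Icc]
      omega
    · rw [Finset.disjoint_left]
      intro a ha hb
      simp only [Finset.mem_Icc] at ha hb
      omega
  · intro i hi i' hi' h
    rw [Finset.mem_coe, hImem] at hi hi'
    rw [pe_eq hn (by omega) (by omega), pe_eq hn (by omega) (by omega), Sym2.eq_iff] at h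
    simp only [Fin.mk.injEq] at h
    omega

lemma cp_tailSum_one (h1 : 2*(s-1) ≤ n) (h2 : 2*(k-s) ≤ n) :
    tailSum (cpOne n k s) n 1 = n - 1 := by
  rw [tailSum_eq_card]
  have hn : 0 < n := by omega
  set J : Finset ℕ := Finset.range (k-1) ∪ Finset.Icc k (n-1) with hJ
  have hJmem : ∀ t, t ∈ J ↔ (t < k - 1 ∨ (k ≤ t ∧ t ≤ n-1)) := by
    intro t; simp [hJ, Finset.mem_union, Finset.mem_range, Finset.mem_Icc]
  set F : ℕ → Sym2 (Fin n) := fun t => if t + 1 < k then pe n hn t else qe n hn s t with hF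
  have himg : (Finset.univ.filter fun e : Sym2 (Fin n) =>
      e ∈ (cpOne n k s).edgeSet ∧ muE (cpOne n k s) e ∈ Finset.Icc 1 (n/2))
      = J.image F := by
    ext e
    induction e using Sym2.ind with
    | _ x y =>
      obtain ⟨xv, hxv⟩ := x
      obtain ⟨yv, hyv⟩ := y
      simp only [Finset.mem_filter, Finset.mem_univ, true_and, Finset.mem_image]
      constructor
      · rintro ⟨hadj, -⟩
        rw [SimpleGraph.mem_edgeSet, cp_adj] at hadj
        obtain ⟨hne, hrel⟩ := hadj
        simp only [Fin.val_mk] at hrel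
        rcases hrel with (⟨ha, hb⟩ | ⟨ha, hb⟩) | (⟨ha, hb⟩ | ⟨ha, hb⟩)
        · have hy' : (⟨yv, hyv⟩ : Fin n) = ⟨xv + 1, by omega⟩ := by
            simp [Fin.ext_iff]; omega
          refine ⟨xv, ?_, ?_⟩
          · rw [hJmem]; omega
          · rw [hF]; simp only
            rw [if_pos (by omega), pe_eq hn (by omega) (by omega), hy']
        · refine ⟨yv, ?_, ?_⟩
          · rw [hJmem]; omega
          · have hx' : (⟨xv, hxv⟩ : Fin n) = ⟨s - 1, by omega⟩ := by
              simp [Fin.ext_iff]; omega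
            rw [hF]; simp only
            rw [if_neg (by omega), qe_eq hn (by omega) hyv, hx']
        · have hx' : (⟨xv, hxv⟩ : Fin n) = ⟨yv + 1, by omega⟩ := by
            simp [Fin.ext_iff]; omega
          refine ⟨yv, ?_, ?_⟩
          · rw [hJmem]; omega
          · rw [hF]; simp only
            rw [if_pos (by omega), pe_eq hn (by omega) (by omega), Sym2.eq_swap, hx']
        · refine ⟨xv, ?_, ?_⟩
          · rw [hJmem]; omega
          · have hy' : (⟨yv, hyv⟩ : Fin n) = ⟨s - 1, by omega⟩ := by
              simp [Fin.ext_iff]; omega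
            rw [hF]; simp only
            rw [if_neg (by omega), qe_eq hn (by omega) hxv, Sym2.eq_swap, hy']
      · rintro ⟨t, htJ, he⟩
        rw [hJmem] at htJ
        rw [hF] at he; simp only at he
        by_cases htk : t + 1 < k
        · rw [if_pos htk, pe_eq hn (by omega) (by omega)] at he
          rw [← he]
          refine ⟨(SimpleGraph.mem_edgeSet _).mpr (cp_adj_succ hkn htk), ?_⟩
          rw [muE_mk, cp_mu_path hs hsk hkn htk h1 h2, Finset.mem_Icc]
          split_ifs with h <;> omega
        · have htk' : k ≤ t ∧ t ≤ n - 1 := by omega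
          rw [if_neg htk, qe_eq hn (by omega) (by omega)] at he
          rw [← he]
          refine ⟨(SimpleGraph.mem_edgeSet _).mpr (cp_adj_pend hs hsk hkn htk'.1 (by omega)), ?_⟩
          rw [muE_mk, cp_mu_pend hs hsk hkn htk'.1 (by omega), Finset.mem_Icc]
          omega
  rw [himg, Finset.card_image_of_injOn]
  · rw [hJ, Finset.card_union_of_disjoint]
    · rw [Nat.card_Icc, Finset.card_range]
      omega
    · rw [Finset.disjoint_left]
      intro a ha hb
      simp only [Finset.mem_range] at ha
      simp only [Finset.mem_Icc] at hb
      omega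
  · intro t ht t' ht' h
    rw [Finset.mem_coe, hJmem] at ht ht'
    rw [hF] at h; simp only at h
    by_cases c1 : t + 1 < k <;> by_cases c2 : t' + 1 < k
    · rw [if_pos c1, if_pos c2, pe_eq hn (by omega) (by omega),
        pe_eq hn (by omega) (by omega), Sym2.eq_iff] at h
      simp only [Fin.mk.injEq] at h
      omega
    · rw [if_pos c1, if_neg c2, pe_eq hn (by omega) (by omega),
        qe_eq hn (by omega) (by omega), Sym2.eq_iff] at h
      simp only [Fin.mk.injEq] at h
      omega
    · rw [if_neg c1, if_pos c2, qe_eq hn (by omega) (by omega),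
        pe_eq hn (by omega) (by omega), Sym2.eq_iff] at h
      simp only [Fin.mk.injEq] at h
      omega
    · rw [if_neg c1, if_neg c2, qe_eq hn (by omega) (by omega),
        qe_eq hn (by omega) (by omega), Sym2.eq_iff] at h
      simp only [Fin.mk.injEq] at h
      omega

end CP6

section Final

lemma star_adj {n : ℕ} {a b : Fin n} :
    (starG n).Adj a b ↔ a ≠ b ∧ ((a:ℕ) = 0 ∨ (b:ℕ) = 0) := by
  simp only [starG, SimpleGraph.fromRel_adj]

lemma path_adj {n : ℕ} {a b : Fin n} :
    (pathG n).Adj a b ↔ a ≠ b ∧ ((a:ℕ) + 1 = b ∨ (b:ℕ) + 1 = a) := by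
  simp only [pathG, SimpleGraph.fromRel_adj]

lemma cp3_adj {n : ℕ} {a b : Fin n} :
    (cpOne n 3 2).Adj a b ↔ a ≠ b ∧ ((a:ℕ) = 1 ∨ (b:ℕ) = 1) := by
  rw [cp_adj]
  have ha := a.isLt
  have hb := b.isLt
  constructor
  · rintro ⟨h1, h2⟩
    exact ⟨h1, by omega⟩
  · rintro ⟨h1, h2⟩
    refine ⟨h1, ?_⟩
    have hne : (a:ℕ) ≠ (b:ℕ) := by
      intro h; exact h1 (Fin.ext h)
    omega

theorem stmt14' (n : ℕ) (hn : 5 ≤ n) :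
    (∀ k, 3 ≤ k → k ≤ n - 1 →
        Prec n (cpOne n k ((k + 1) / 2)) (cpOne n (k + 1) ((k + 2) / 2))) ∧
    Nonempty (starG n ≃g cpOne n 3 2) ∧
    Nonempty (cpOne n n ((n + 1) / 2) ≃g pathG n) := by
  refine ⟨?_, ?_, ?_⟩
  · intro k hk3 hkn1
    have hs1 : 2 ≤ (k+1)/2 := by omega
    have hsk1 : (k+1)/2 + 1 ≤ k := by omega
    have hkn : k ≤ n := by omega
    have h11 : 2*((k+1)/2 - 1) ≤ n := by omega
    have h12 : 2*(k - (k+1)/2) ≤ n := by omega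
    have hs2 : 2 ≤ (k+2)/2 := by omega
    have hsk2 : (k+2)/2 + 1 ≤ k + 1 := by omega
    have hkn2 : k + 1 ≤ n := by omega
    have h21 : 2*((k+2)/2 - 1) ≤ n := by omega
    have h22 : 2*(k + 1 - (k+2)/2) ≤ n := by omega
    constructor
    · intro j hj1 hjn2
      by_cases hj : j = 1
      · subst hj
        rw [cp_tailSum_one hs1 hsk1 hkn h11 h12, cp_tailSum_one hs2 hsk2 hkn2 h21 h22]
      · have hj2 : 2 ≤ j := by omega
        rw [cp_tailSum_ge_two hs1 hsk1 hkn hj2 h11 h12,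
          cp_tailSum_ge_two hs2 hsk2 hkn2 hj2 h21 h22]
        omega
    · refine ⟨2, by omega, by omega, ?_⟩
      rw [cp_tailSum_ge_two hs1 hsk1 hkn (by omega) h11 h12,
        cp_tailSum_ge_two hs2 hsk2 hkn2 (by omega) h21 h22]
      omega
  · -- star ≃g cpOne n 3 2
    have hval : ∀ a : Fin n,
        ((Equiv.swap (⟨0, by omega⟩ : Fin n) ⟨1, by omega⟩ a : Fin n) : ℕ) = 1 ↔ (a:ℕ) = 0 := by
      intro a
      by_cases h0 : a = ⟨0, by omega⟩
      · subst h0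
        rw [Equiv.swap_apply_left]
        simp [Fin.ext_iff]
      · by_cases h1 : a = ⟨1, by omega⟩
        · subst h1
          rw [Equiv.swap_apply_right]
          simp [Fin.ext_iff]
        · rw [Equiv.swap_apply_of_ne_of_ne h0 h1]
          simp only [Fin.ext_iff, Fin.val_mk] at h0 h1
          omega
    refine ⟨⟨Equiv.swap ⟨0, by omega⟩ ⟨1, by omega⟩, ?_⟩⟩
    intro a b
    rw [cp3_adj, star_adj]
    rw [hval a, hval b]
    simp only [ne_eq, EmbeddingLike.apply_eq_iff_eq]
  · -- cpOne n n ((n+1)/2) ≃g pathG n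
    refine ⟨⟨Equiv.refl _, ?_⟩⟩
    intro a b
    simp only [Equiv.refl_apply]
    rw [cp_adj, path_adj]
    have ha := a.isLt
    have hb := b.isLt
    constructor
    · rintro ⟨h1, h2⟩
      exact ⟨h1, by omega⟩
    · rintro ⟨h1, h2⟩
      exact ⟨h1, by omega⟩

end Final

/-- For every `n ≥ 5` and every `k` with `3 ≤ k ≤ n − 1`,
`CP_{n,k}^{⌈k/2⌉} ≺ CP_{n,k+1}^{⌈(k+1)/2⌉}` (where `CP_{n,n}^{⌈n/2⌉}` is the path `P_n`);
hence `S_n = CP_{n,3}^2 ≺ CP_{n,4}^2 ≺ ⋯ ≺ CP_{n,n−1}^{⌈(n−1)/2⌉} ≺ P_n`. -/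
theorem stmt14 (n : ℕ) (hn : 5 ≤ n) :
    (∀ k, 3 ≤ k → k ≤ n - 1 →
        Prec n (cpOne n k ((k + 1) / 2)) (cpOne n (k + 1) ((k + 2) / 2))) ∧
    Nonempty (starG n ≃g cpOne n 3 2) ∧
    Nonempty (cpOne n n ((n + 1) / 2) ≃g pathG n) :=
  stmt14' n hn

end TreeOrder
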